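/- arXiv:1708.02609 — 2 statements merged into one kernel-verified Lean document; each statement's English description precedes it below -/
import Mathlib

section
/- Let (V1, V2) be a pair of commuting isometries on a Hilbert space H, with V = V1V2. Then both the shift part H_s(V) = ⊕_{m≥0} V^m(H ⊖ VH) and the unitary part H_u(V) of the Wold decomposition of V are reducing subspaces for V1 and for V2. -/
open ContinuousLinearMap Filter Topology Metric
open scoped InnerProductSpace

open Classical in
/-- Orthogonal projection onto a subspace, as an operator on the ambient space. -/
noncomputable def projCLM {H : Type*} [NormedAddCommGroup H] [InnerProductSpace ℂ H]
    (K : Submodule ℂ H) : H →L[ℂ] H :=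
  if h : Submodule.HasOrthogonalProjection K then K.subtypeL.comp (@Submodule.orthogonalProjectionOnto ℂ H _ _ _ K h)
  else 0

section Helpers
set_option linter.unusedSectionVars false

variable {H : Type*} [NormedAddCommGroup H] [InnerProductSpace ℂ H] [CompleteSpace H]

lemma isom_inner (A : H →L[ℂ] H) (hA : ∀ x, ‖A x‖ = ‖x‖) (x y : H) :
    ⟪A x, A y⟫_ℂ = ⟪x, y⟫_ℂ :=
  (LinearIsometry.mk (A : H →ₗ[ℂ] H) hA).inner_map_map x y

lemma adj_comp_self (A : H →L[ℂ] H) (hA : ∀ x, ‖A x‖ = ‖x‖) (x : H) :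
    adjoint A (A x) = x := by
  apply ext_inner_right ℂ
  intro v
  rw [adjoint_inner_left, isom_inner A hA]

lemma isom_range_closed (A : H →L[ℂ] H) (hA : ∀ x, ‖A x‖ = ‖x‖) :
    IsClosed ((LinearMap.range (A : H →ₗ[ℂ] H) : Submodule ℂ H) : Set H) := by
  have : IsClosed (Set.range A) :=
    ((AddMonoidHomClass.isometry_of_norm A hA).isClosedEmbedding).isClosed_range
  simpa [LinearMap.coe_range] using this

lemma orth_ker_adjoint (A : H →L[ℂ] H) (hA : ∀ x, ‖A x‖ = ‖x‖) :
    (LinearMap.ker (adjoint A : H →ₗ[ℂ] H))ᗮ = LinearMap.range (A : H →ₗ[ℂ] H) := by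
  have h1 : (LinearMap.range (A : H →ₗ[ℂ] H))ᗮ = LinearMap.ker (adjoint A : H →ₗ[ℂ] H) := by
    ext z
    simp only [Submodule.mem_orthogonal, LinearMap.mem_range, LinearMap.mem_ker]
    constructor
    · intro h
      apply ext_inner_right ℂ
      intro v
      have := h (A v) ⟨v, rfl⟩
      rw [inner_eq_zero_symm] at this
      rw [← adjoint_inner_left] at this
      simpa using this
    · rintro h y ⟨v, rfl⟩
      show ⟪A v, z⟫_ℂ = 0
      rw [← adjoint_inner_right, show (adjoint A) z = 0 from h, inner_zero_right]
  haveI : CompleteSpace (LinearMap.range (A : H →ₗ[ℂ] H)) :=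
    (isom_range_closed A hA).completeSpace_coe
  haveI : Submodule.HasOrthogonalProjection (LinearMap.range (A : H →ₗ[ℂ] H)) :=
    Submodule.HasOrthogonalProjection.ofCompleteSpace _
  rw [← h1, Submodule.orthogonal_orthogonal]
end Helpers

theorem stmt_8 {H : Type*} [NormedAddCommGroup H] [InnerProductSpace ℂ H] [CompleteSpace H]
    (V1 V2 : H →L[ℂ] H) (hV1 : ∀ x, ‖V1 x‖ = ‖x‖) (hV2 : ∀ x, ‖V2 x‖ = ‖x‖)
    (hcomm : V1 ∘L V2 = V2 ∘L V1)
    (V : H →L[ℂ] H) (hV : V = V1 ∘L V2)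
    (W : Submodule ℂ H) (hW : W = LinearMap.ker (adjoint V : H →ₗ[ℂ] H))
    (Hs Hu : Submodule ℂ H)
    (hHs : Hs = (⨆ m : ℕ, W.map ((V ^ m : H →L[ℂ] H) : H →ₗ[ℂ] H)).topologicalClosure)
    (hHu : Hu = Hsᗮ) :
    (∀ x ∈ Hs, V1 x ∈ Hs ∧ adjoint V1 x ∈ Hs) ∧
    (∀ x ∈ Hs, V2 x ∈ Hs ∧ adjoint V2 x ∈ Hs) ∧
    (∀ x ∈ Hu, V1 x ∈ Hu ∧ adjoint V1 x ∈ Hu) ∧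
    (∀ x ∈ Hu, V2 x ∈ Hu ∧ adjoint V2 x ∈ Hu) := by
  have hV' : V = V1 * V2 := hV
  have h12 : V1 * V2 = V2 * V1 := hcomm
  have hVisom : ∀ x, ‖V x‖ = ‖x‖ := by
    intro x
    rw [hV]
    show ‖V1 (V2 x)‖ = ‖x‖
    rw [hV1, hV2]
  have hVmisom : ∀ m (x : H), ‖(V ^ m) x‖ = ‖x‖ := by
    intro m
    induction m with
    | zero => simp
    | succ n ih =>
      intro x
      rw [pow_succ]
      show ‖(V ^ n) (V x)‖ = ‖x‖
      rw [ih, hVisom]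
  have c1 : V1 * V = V * V1 := by rw [hV', mul_assoc, ← h12]
  have c2 : V2 * V = V * V2 := by rw [hV', ← mul_assoc, ← h12]
  have cm1 : ∀ m, V1 * V ^ m = V ^ m * V1 := fun m => (Commute.pow_right c1 m)
  have cm2 : ∀ m, V2 * V ^ m = V ^ m * V2 := fun m => (Commute.pow_right c2 m)
  -- Hu as an intersection of orthogonal complements
  have hclos : Hu = (⨆ m : ℕ, W.map ((V ^ m : H →L[ℂ] H) : H →ₗ[ℂ] H))ᗮ := by
    rw [hHu, hHs]
    refine le_antisymm (Submodule.orthogonal_le (Submodule.le_topologicalClosure _)) ?_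
    rw [← Submodule.orthogonal_orthogonal_eq_closure]
    exact Submodule.le_orthogonal_orthogonal _
  have hHuMem : ∀ x, x ∈ Hu ↔ ∀ m : ℕ,
      x ∈ (W.map ((V ^ m : H →L[ℂ] H) : H →ₗ[ℂ] H))ᗮ := by
    intro x
    rw [hclos, ← Submodule.iInf_orthogonal]
    exact Submodule.mem_iInf _
  -- Step A : range (V^(m+1)) ⊆ (V^m W)ᗮ
  have stepA : ∀ (m : ℕ) (x : H), (∃ y, (V ^ (m + 1)) y = x) →
      x ∈ (W.map ((V ^ m : H →L[ℂ] H) : H →ₗ[ℂ] H))ᗮ := by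
    rintro m x ⟨y, rfl⟩
    intro u hu
    obtain ⟨w, hwW, rfl⟩ := hu
    have hw0 : adjoint V w = 0 := by rw [hW] at hwW; exact hwW
    have hxy : (V ^ (m + 1)) y = (V ^ m) (V y) := by rw [pow_succ]; rfl
    show ⟪(V ^ m) w, (V ^ (m + 1)) y⟫_ℂ = 0
    rw [hxy, isom_inner (V ^ m) (hVmisom m), ← adjoint_inner_left, hw0, inner_zero_left]
  -- Step B : Hu ⊆ range (V^m) for every m
  have stepB : ∀ (m : ℕ) (x : H), x ∈ Hu → ∃ y, (V ^ m) y = x := by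
    intro m
    induction m with
    | zero => exact fun x _ => ⟨x, by simp⟩
    | succ n ih =>
      intro x hx
      obtain ⟨y, hy⟩ := ih x hx
      have horth : x ∈ (W.map ((V ^ n : H →L[ℂ] H) : H →ₗ[ℂ] H))ᗮ := (hHuMem x).1 hx n
      have hyW : y ∈ Wᗮ := by
        intro w hw
        have := horth ((V ^ n) w) ⟨w, hw, rfl⟩
        rw [← hy, isom_inner (V ^ n) (hVmisom n)] at this
        exact this
      rw [hW, orth_ker_adjoint V hVisom] at hyW
      obtain ⟨z, hz⟩ := hyW
      refine ⟨z, ?_⟩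
      rw [pow_succ]
      show (V ^ n) (V z) = x
      rw [show V z = y from hz, hy]
  have hiff : ∀ x, x ∈ Hu ↔ ∀ m : ℕ, ∃ y, (V ^ m) y = x := by
    intro x
    constructor
    · exact fun hx m => stepB m x hx
    · intro h
      rw [hHuMem]
      exact fun m => stepA m x (h (m + 1))
  -- Hu is reducing for V1 and V2
  have huRed : ∀ (A : H →L[ℂ] H), (∀ m, A * V ^ m = V ^ m * A) →
      ∀ x ∈ Hu, A x ∈ Hu := by
    intro A hA x hx
    rw [hiff] at hx ⊢
    intro m
    obtain ⟨y, hy⟩ := hx m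
    refine ⟨A y, ?_⟩
    have : (V ^ m * A) y = (A * V ^ m) y := by rw [hA m]
    simpa [ContinuousLinearMap.mul_apply, hy] using this
  have huV1 : ∀ x ∈ Hu, V1 x ∈ Hu := huRed V1 cm1
  have huV2 : ∀ x ∈ Hu, V2 x ∈ Hu := huRed V2 cm2
  have huAdjV1 : ∀ x ∈ Hu, adjoint V1 x ∈ Hu := by
    intro x hx
    rw [hiff] at hx ⊢
    intro m
    obtain ⟨z, hz⟩ := hx (m + 1)
    refine ⟨V2 z, ?_⟩
    have hfac : (V ^ (m + 1)) z = V1 ((V ^ m) (V2 z)) := by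
      have : V ^ (m + 1) = V1 * (V ^ m * V2) := by
        rw [← cm2, ← mul_assoc, ← hV', pow_succ']
      rw [this]; rfl
    rw [← hz, hfac, adj_comp_self V1 hV1]
  have huAdjV2 : ∀ x ∈ Hu, adjoint V2 x ∈ Hu := by
    intro x hx
    rw [hiff] at hx ⊢
    intro m
    obtain ⟨z, hz⟩ := hx (m + 1)
    refine ⟨V1 z, ?_⟩
    have hfac : (V ^ (m + 1)) z = V2 ((V ^ m) (V1 z)) := by
      have : V ^ (m + 1) = V2 * (V ^ m * V1) := by
        rw [← cm1, ← mul_assoc, ← h12, ← hV', pow_succ']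
      rw [this]; rfl
    rw [← hz, hfac, adj_comp_self V2 hV2]
  -- Hs = Huᗮ
  haveI : CompleteSpace Hs := by
    rw [hHs]
    exact (Submodule.isClosed_topologicalClosure _).completeSpace_coe
  haveI : Submodule.HasOrthogonalProjection Hs := Submodule.HasOrthogonalProjection.ofCompleteSpace _
  have hHsHu : Hs = Huᗮ := by rw [hHu, Submodule.orthogonal_orthogonal]
  have hsMem : ∀ x, x ∈ Hs ↔ ∀ u ∈ Hu, ⟪u, x⟫_ℂ = 0 := by
    intro x; rw [hHsHu]; exact Iff.rfl
  have hsRed : ∀ (A : H →L[ℂ] H), (∀ u ∈ Hu, A u ∈ Hu) → (∀ u ∈ Hu, adjoint A u ∈ Hu) →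
      ∀ x ∈ Hs, A x ∈ Hs ∧ adjoint A x ∈ Hs := by
    intro A hA hAadj x hx
    rw [hsMem] at hx
    constructor
    · rw [hsMem]
      intro u hu
      have : ⟪u, A x⟫_ℂ = ⟪adjoint A u, x⟫_ℂ := (adjoint_inner_left A x u).symm
      rw [this]
      exact hx _ (hAadj u hu)
    · rw [hsMem]
      intro u hu
      have : ⟪u, adjoint A x⟫_ℂ = ⟪A u, x⟫_ℂ := adjoint_inner_right A u x
      rw [this]
      exact hx _ (hA u hu)
  refine ⟨hsRed V1 huV1 huAdjV1, hsRed V2 huV2 huAdjV2, ?_, ?_⟩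
  · exact fun x hx => ⟨huV1 x hx, huAdjV1 x hx⟩
  · exact fun x hx => ⟨huV2 x hx, huAdjV2 x hx⟩
end

section
/- Let (V1, V2) be commuting isometries on H. Then the defect operator C(V1,V2) = I − V1V1* − V2V2* + V1V2V1*V2* equals P_{W1} − P_{V2 W1} and also equals P_{W2} − P_{V1 W2}, where W1 = ker V1*, W2 = ker V2*. -/
open ContinuousLinearMap Filter Topology Metric
open scoped InnerProductSpace

lemma projCLM_eq {H : Type*} [NormedAddCommGroup H] [InnerProductSpace ℂ H]
    (K : Submodule ℂ H) [K.HasOrthogonalProjection] (P : H →L[ℂ] H)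
    (hmem : ∀ x, P x ∈ K) (horth : ∀ x, ∀ w ∈ K, ⟪x - P x, w⟫_ℂ = 0) :
    projCLM K = P := by
  ext x
  rw [projCLM, dif_pos ‹_›]
  exact (K.starProjection_apply x).symm.trans (K.eq_starProjection_of_mem_of_inner_eq_zero (hmem x) (horth x))

lemma adj_apply_self {H : Type*} [NormedAddCommGroup H] [InnerProductSpace ℂ H]
    [CompleteSpace H] (V : H →L[ℂ] H) (hV : ∀ x, ‖V x‖ = ‖x‖) (x : H) :
    adjoint V (V x) = x := by
  apply ext_inner_right ℂ
  intro y
  rw [adjoint_inner_left]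
  exact LinearIsometry.inner_map_map ⟨V.toLinearMap, hV⟩ x y

lemma key {H : Type*} [NormedAddCommGroup H] [InnerProductSpace ℂ H] [CompleteSpace H]
    (V1 V2 : H →L[ℂ] H) (hV1 : ∀ x, ‖V1 x‖ = ‖x‖) (hV2 : ∀ x, ‖V2 x‖ = ‖x‖)
    (hcomm : V1 ∘L V2 = V2 ∘L V1) :
    1 - V1 ∘L adjoint V1 - V2 ∘L adjoint V2
        + V1 ∘L V2 ∘L adjoint V1 ∘L adjoint V2
      = projCLM (LinearMap.ker (adjoint V1 : H →ₗ[ℂ] H))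
        - projCLM ((LinearMap.ker (adjoint V1 : H →ₗ[ℂ] H)).map (V2 : H →ₗ[ℂ] H)) := by
  set K : Submodule ℂ H := LinearMap.ker (adjoint V1 : H →ₗ[ℂ] H) with hK
  have hKc : IsClosed (K : Set H) := ContinuousLinearMap.isClosed_ker (adjoint V1)
  haveI : CompleteSpace K := hKc.completeSpace_coe
  have hiso2 : Isometry V2 := AddMonoidHomClass.isometry_of_norm V2 hV2
  have hMc : IsClosed ((K.map (V2 : H →ₗ[ℂ] H)) : Set H) := by
    rw [Submodule.map_coe]
    exact hiso2.isClosedEmbedding.isClosedMap _ hKc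
  haveI : CompleteSpace (K.map (V2 : H →ₗ[ℂ] H)) := hMc.completeSpace_coe
  have hmemK : ∀ x, (1 - V1 ∘L adjoint V1) x ∈ K := by
    intro x
    simp [hK, LinearMap.mem_ker, map_sub, adj_apply_self V1 hV1]
  have h1 : projCLM K = 1 - V1 ∘L adjoint V1 := by
    apply projCLM_eq K _ hmemK
    intro x w hw
    rw [hK, LinearMap.mem_ker] at hw
    have hw : adjoint V1 w = 0 := hw
    have : x - (1 - V1 ∘L adjoint V1) x = V1 (adjoint V1 x) := by
      simp
    rw [this, ← adjoint_inner_right, hw, inner_zero_right]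
  have h2 : projCLM (K.map (V2 : H →ₗ[ℂ] H))
      = V2 ∘L (1 - V1 ∘L adjoint V1) ∘L adjoint V2 := by
    apply projCLM_eq
    · intro x
      exact ⟨(1 - V1 ∘L adjoint V1) (adjoint V2 x), hmemK _, rfl⟩
    · rintro x w ⟨u, hu, rfl⟩
      have hu : adjoint V1 u = 0 := hu
      have hv2u : (V2 : H →ₗ[ℂ] H) u = V2 u := rfl
      rw [hv2u]
      rw [inner_sub_left]
      have h3 : ⟪(V2 ∘L (1 - V1 ∘L adjoint V1) ∘L adjoint V2) x, V2 u⟫_ℂ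
          = ⟪(1 - V1 ∘L adjoint V1) (adjoint V2 x), u⟫_ℂ := by
        exact LinearIsometry.inner_map_map ⟨V2.toLinearMap, hV2⟩ _ _
      rw [h3]
      simp only [sub_apply, ContinuousLinearMap.one_apply, comp_apply, inner_sub_left]
      rw [adjoint_inner_left, ← adjoint_inner_right, hu, inner_zero_right]
      ring
  rw [h1, h2]
  have hc : ∀ x, V1 (V2 x) = V2 (V1 x) := fun x => by simpa using ContinuousLinearMap.ext_iff.1 hcomm x
  ext x
  simp [hc, sub_sub]
  abel

theorem stmt_13 {H : Type*} [NormedAddCommGroup H] [InnerProductSpace ℂ H] [CompleteSpace H]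
    (V1 V2 : H →L[ℂ] H) (hV1 : ∀ x, ‖V1 x‖ = ‖x‖) (hV2 : ∀ x, ‖V2 x‖ = ‖x‖)
    (hcomm : V1 ∘L V2 = V2 ∘L V1)
    (C : H →L[ℂ] H)
    (hCdef : C = 1 - V1 ∘L adjoint V1 - V2 ∘L adjoint V2
        + V1 ∘L V2 ∘L adjoint V1 ∘L adjoint V2)
    (W1 W2 : Submodule ℂ H)
    (hW1 : W1 = LinearMap.ker (adjoint V1 : H →ₗ[ℂ] H))
    (hW2 : W2 = LinearMap.ker (adjoint V2 : H →ₗ[ℂ] H)) :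
    C = projCLM W1 - projCLM (W1.map (V2 : H →ₗ[ℂ] H)) ∧
    C = projCLM W2 - projCLM (W2.map (V1 : H →ₗ[ℂ] H)) := by
  subst hW1 hW2 hCdef
  constructor
  · exact key V1 V2 hV1 hV2 hcomm
  · have h := key V2 V1 hV2 hV1 hcomm.symm
    rw [← h]
    have hc : ∀ x, V1 (V2 x) = V2 (V1 x) := fun x => by simpa using ContinuousLinearMap.ext_iff.1 hcomm x
    have hcadj : ∀ x, adjoint V1 (adjoint V2 x) = adjoint V2 (adjoint V1 x) := by
      intro x
      rw [← comp_apply, ← adjoint_comp, hcomm.symm, adjoint_comp, comp_apply]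
    ext x
    simp [hc, hcadj]
    abel
end
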